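/- Let q, p : End_ℂ(ℂ[X]) be the ℂ-linear endomorphisms of the polynomial ring ℂ[X] given by q(f) = X·f (multiplication by X) and p(f) = −i·f′ (−i times the formal derivative), and let n = (q² + p² − 1)/2. Let σx, σy, σz denote the Pauli matrices in M₂(ℂ), and let B = End_ℂ(ℂ[X]) ⊗_ℂ M₂(ℂ), regarded as a Lie algebra over ℂ with bracket [a,b] = ab − ba. Then the Lie subalgebra of B generated (as a ℂ-Lie subalgebra) by the set {n⊗σz, q⊗1, p⊗1, 1⊗σx, 1⊗σy} contains qʳpˢ ⊗ M for every pair of natural numbers r, s and every matrix M ∈ M₂(ℂ). -/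

import Mathlib

open scoped TensorProduct Matrix

attribute [local instance 100] LieRing.ofAssociativeRing

set_option maxHeartbeats 1000000
set_option synthInstance.maxHeartbeats 400000

abbrev E := Module.End ℂ (Polynomial ℂ)

lemma L1 (q p : E)
    (hq : ∀ f : Polynomial ℂ, q f = Polynomial.X * f)
    (hp : ∀ f : Polynomial ℂ, p f = (-Complex.I) • Polynomial.derivative f) :
    q * p - p * q = Complex.I • 1 := by
  refine LinearMap.ext fun f => ?_
  simp only [LinearMap.sub_apply, Module.End.mul_apply, LinearMap.smul_apply,
    Module.End.one_apply, hq, hp, Polynomial.derivative_mul, Polynomial.derivative_X,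
    smul_add, map_smul, one_mul, mul_smul_comm]
  module

lemma L2 (q p n : E) (hc : q*p - p*q = Complex.I•1)
    (hn : n = ((1:ℂ)/2) • (q^2 + p^2 - 1)) :
    n*q - q*n = -(Complex.I • p) := by
  have key : p*p*q - q*(p*p) = -(p*(q*p - p*q) + (q*p - p*q)*p) := by
    simp only [mul_sub, sub_mul, mul_assoc]; abel
  rw [hc] at key
  simp only [mul_smul_comm, smul_mul_assoc, mul_one, one_mul] at key
  have expand : (q^2+p^2-1)*q - q*(q^2+p^2-1) = p*p*q - q*(p*p) := by
    simp only [pow_two, mul_sub, sub_mul, add_mul, mul_add, one_mul, mul_one, mul_assoc]; abel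
  have final := expand.trans key
  rw [hn]
  simp only [smul_mul_assoc, mul_smul_comm]
  linear_combination (norm := module) ((1:ℂ)/2) • final

lemma L3 (q p n : E) (hc : q*p - p*q = Complex.I•1)
    (hn : n = ((1:ℂ)/2) • (q^2 + p^2 - 1)) :
    n*p - p*n = Complex.I • q := by
  have key : q*q*p - p*(q*q) = q*(q*p - p*q) + (q*p - p*q)*q := by
    simp only [mul_sub, sub_mul, mul_assoc]; abel
  rw [hc] at key
  simp only [mul_smul_comm, smul_mul_assoc, mul_one, one_mul] at key
  have expand : (q^2+p^2-1)*p - p*(q^2+p^2-1) = q*q*p - p*(q*q) := by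
    simp only [pow_two, mul_sub, sub_mul, add_mul, mul_add, one_mul, mul_one, mul_assoc]; abel
  have final := expand.trans key
  rw [hn]
  simp only [smul_mul_assoc, mul_smul_comm]
  linear_combination (norm := module) ((1:ℂ)/2) • final

lemma L4 (q p : E) (hc : q*p - p*q = Complex.I•1) :
    ∀ t:ℕ, p^(t+1)*q = q*p^(t+1) - (((t:ℂ)+1)*Complex.I)•p^t := by
  have hpq : p*q = q*p - Complex.I•(1:E) := by
    rw [← hc]; noncomm_ring
  intro t; induction t with
  | zero => simp [hpq]
  | succ t iht =>
    rw [pow_succ' p (t+1), mul_assoc, iht, mul_sub, mul_smul_comm, ← pow_succ',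
      ← mul_assoc, hpq, sub_mul, smul_mul_assoc, one_mul, mul_assoc, ← pow_succ']
    push_cast
    module

lemma L5 (q p : E) (hc : q*p - p*q = Complex.I•1) :
    ∀ r s : ℕ, (q^r*p^s)*q = q^(r+1)*p^s - ((s:ℂ)*Complex.I)•(q^r*p^(s-1)) := by
  intro r s
  cases s with
  | zero => simp [pow_succ]
  | succ t =>
    rw [mul_assoc, L4 q p hc t, mul_sub, mul_smul_comm, ← mul_assoc, ← pow_succ]
    push_cast
    rfl



/-- The Lie subalgebra of `End(ℂ[X]) ⊗ M₂(ℂ)` (with commutator bracket) generated by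
`{n ⊗ σz, q ⊗ 1, p ⊗ 1, 1 ⊗ σx, 1 ⊗ σy}`, where `q` is multiplication by `X`,
`p = -i d/dX` and `n = (q² + p² - 1)/2`, contains `qʳpˢ ⊗ M` for all `r s : ℕ`
and every `M ∈ M₂(ℂ)`. -/
theorem stmt_0
    (q p n : Module.End ℂ (Polynomial ℂ))
    (hq : ∀ f : Polynomial ℂ, q f = Polynomial.X * f)
    (hp : ∀ f : Polynomial ℂ, p f = (-Complex.I) • Polynomial.derivative f)
    (hn : n = ((1 : ℂ)/2) • (q ^ 2 + p ^ 2 - 1))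
    (σx σy σz : Matrix (Fin 2) (Fin 2) ℂ)
    (hx : σx = !![0, 1; 1, 0])
    (hy : σy = !![0, -Complex.I; Complex.I, 0])
    (hz : σz = !![1, 0; 0, -1]) :
    ∀ (r s : ℕ) (M : Matrix (Fin 2) (Fin 2) ℂ),
      (q ^ r * p ^ s) ⊗ₜ[ℂ] M ∈
        LieSubalgebra.lieSpan ℂ
          (Module.End ℂ (Polynomial ℂ) ⊗[ℂ] Matrix (Fin 2) (Fin 2) ℂ)
          ({n ⊗ₜ[ℂ] σz,
            q ⊗ₜ[ℂ] (1 : Matrix (Fin 2) (Fin 2) ℂ),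
            p ⊗ₜ[ℂ] (1 : Matrix (Fin 2) (Fin 2) ℂ),
            (1 : Module.End ℂ (Polynomial ℂ)) ⊗ₜ[ℂ] σx,
            (1 : Module.End ℂ (Polynomial ℂ)) ⊗ₜ[ℂ] σy} :
            Set (Module.End ℂ (Polynomial ℂ) ⊗[ℂ] Matrix (Fin 2) (Fin 2) ℂ)) := by
  set K : LieSubalgebra ℂ (Module.End ℂ (Polynomial ℂ) ⊗[ℂ] Matrix (Fin 2) (Fin 2) ℂ) :=
    LieSubalgebra.lieSpan ℂ
          (Module.End ℂ (Polynomial ℂ) ⊗[ℂ] Matrix (Fin 2) (Fin 2) ℂ)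
          ({n ⊗ₜ[ℂ] σz,
            q ⊗ₜ[ℂ] (1 : Matrix (Fin 2) (Fin 2) ℂ),
            p ⊗ₜ[ℂ] (1 : Matrix (Fin 2) (Fin 2) ℂ),
            (1 : Module.End ℂ (Polynomial ℂ)) ⊗ₜ[ℂ] σx,
            (1 : Module.End ℂ (Polynomial ℂ)) ⊗ₜ[ℂ] σy} :
            Set (Module.End ℂ (Polynomial ℂ) ⊗[ℂ] Matrix (Fin 2) (Fin 2) ℂ)) with hK
  have hg1 : n ⊗ₜ[ℂ] σz ∈ K := LieSubalgebra.subset_lieSpan (Set.mem_insert _ _)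
  have hg2 : q ⊗ₜ[ℂ] (1 : Matrix (Fin 2) (Fin 2) ℂ) ∈ K :=
    LieSubalgebra.subset_lieSpan (Set.mem_insert_of_mem _ (Set.mem_insert _ _))
  have hg3 : p ⊗ₜ[ℂ] (1 : Matrix (Fin 2) (Fin 2) ℂ) ∈ K :=
    LieSubalgebra.subset_lieSpan
      (Set.mem_insert_of_mem _ (Set.mem_insert_of_mem _ (Set.mem_insert _ _)))
  have hg4 : (1 : Module.End ℂ (Polynomial ℂ)) ⊗ₜ[ℂ] σx ∈ K :=
    LieSubalgebra.subset_lieSpan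
      (Set.mem_insert_of_mem _ (Set.mem_insert_of_mem _ (Set.mem_insert_of_mem _
        (Set.mem_insert _ _))))
  have hg5 : (1 : Module.End ℂ (Polynomial ℂ)) ⊗ₜ[ℂ] σy ∈ K :=
    LieSubalgebra.subset_lieSpan
      (Set.mem_insert_of_mem _ (Set.mem_insert_of_mem _ (Set.mem_insert_of_mem _
        (Set.mem_insert_of_mem _ rfl))))
  have hc := L1 q p hq hp
  have hnq := L2 q p n hc hn
  have hnp := L3 q p n hc hn
  have hswap := L5 q p hc
  -- Pauli multiplication table
  have hxx : σx*σx = 1 := by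
    rw [hx]; ext i j
    fin_cases i <;> fin_cases j <;>
      simp [Matrix.mul_apply, Fin.sum_univ_two, Matrix.one_apply]
  have hxy : σx*σy = Complex.I • σz := by
    rw [hx, hy, hz]; ext i j
    fin_cases i <;> fin_cases j <;> simp [Matrix.mul_apply, Fin.sum_univ_two]
  have hyx : σy*σx = -(Complex.I • σz) := by
    rw [hx, hy, hz]; ext i j
    fin_cases i <;> fin_cases j <;> simp [Matrix.mul_apply, Fin.sum_univ_two]
  have hyz : σy*σz = Complex.I • σx := by
    rw [hx, hy, hz]; ext i j
    fin_cases i <;> fin_cases j <;> simp [Matrix.mul_apply, Fin.sum_univ_two]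
  have hzy : σz*σy = -(Complex.I • σx) := by
    rw [hx, hy, hz]; ext i j
    fin_cases i <;> fin_cases j <;> simp [Matrix.mul_apply, Fin.sum_univ_two]
  have hzx : σz*σx = Complex.I • σy := by
    rw [hx, hy, hz]; ext i j
    fin_cases i <;> fin_cases j <;> simp [Matrix.mul_apply, Fin.sum_univ_two]
  have hxz : σx*σz = -(Complex.I • σy) := by
    rw [hx, hy, hz]; ext i j
    fin_cases i <;> fin_cases j <;> simp [Matrix.mul_apply, Fin.sum_univ_two]
  -- generic helpers
  have tbrk : ∀ (a b : Module.End ℂ (Polynomial ℂ)) (m m' : Matrix (Fin 2) (Fin 2) ℂ),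
      ⁅a ⊗ₜ[ℂ] m, b ⊗ₜ[ℂ] m'⁆ = (a*b) ⊗ₜ[ℂ] (m*m') - (b*a) ⊗ₜ[ℂ] (m'*m) := by
    intro a b m m'
    rw [Ring.lie_def, Algebra.TensorProduct.tmul_mul_tmul, Algebra.TensorProduct.tmul_mul_tmul]
  have hscal : ∀ (c : ℂ) (v : Module.End ℂ (Polynomial ℂ) ⊗[ℂ] Matrix (Fin 2) (Fin 2) ℂ),
      c ≠ 0 → c • v ∈ K → v ∈ K := by
    intro c v hc0 h
    have h2 := K.smul_mem c⁻¹ h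
    rwa [smul_smul, inv_mul_cancel₀ hc0, one_smul] at h2
  have hanti : ∀ (X Y : Module.End ℂ (Polynomial ℂ)) (A B C : Matrix (Fin 2) (Fin 2) ℂ),
      A*B = Complex.I • C → B*A = -(Complex.I • C) →
      X ⊗ₜ[ℂ] A ∈ K → Y ⊗ₜ[ℂ] B ∈ K → (X*Y + Y*X) ⊗ₜ[ℂ] C ∈ K := by
    intro X Y A B C hAB hBA h1 h2
    have hb := K.lie_mem h1 h2
    have heq : ⁅X ⊗ₜ[ℂ] A, Y ⊗ₜ[ℂ] B⁆ = Complex.I • ((X*Y + Y*X) ⊗ₜ[ℂ] C) := by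
      rw [tbrk, hAB, hBA]
      simp only [TensorProduct.tmul_smul, TensorProduct.tmul_neg, TensorProduct.add_tmul,
        smul_add]
      module
    rw [heq] at hb
    exact hscal _ _ Complex.I_ne_zero hb
  have hhalf : ∀ (X : Module.End ℂ (Polynomial ℂ)) (C : Matrix (Fin 2) (Fin 2) ℂ),
      (X + X) ⊗ₜ[ℂ] C ∈ K → X ⊗ₜ[ℂ] C ∈ K := by
    intro X C h
    have h2 := K.smul_mem ((1:ℂ)/2) h
    rwa [show ((1:ℂ)/2) • ((X+X) ⊗ₜ[ℂ] C) = X ⊗ₜ[ℂ] C by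
      rw [TensorProduct.add_tmul]; module] at h2
  -- degree-1 elements
  have hqz : q ⊗ₜ[ℂ] σz ∈ K := by
    have hb := K.lie_mem hg1 hg3
    have heq : ⁅n ⊗ₜ[ℂ] σz, p ⊗ₜ[ℂ] (1 : Matrix (Fin 2) (Fin 2) ℂ)⁆
        = Complex.I • (q ⊗ₜ[ℂ] σz) := by
      rw [tbrk, mul_one, one_mul, ← TensorProduct.sub_tmul, hnp, TensorProduct.smul_tmul']
    rw [heq] at hb
    exact hscal _ _ Complex.I_ne_zero hb
  have hpz : p ⊗ₜ[ℂ] σz ∈ K := by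
    have hb := K.lie_mem hg1 hg2
    have heq : ⁅n ⊗ₜ[ℂ] σz, q ⊗ₜ[ℂ] (1 : Matrix (Fin 2) (Fin 2) ℂ)⁆
        = (-Complex.I) • (p ⊗ₜ[ℂ] σz) := by
      rw [tbrk, mul_one, one_mul, ← TensorProduct.sub_tmul, hnq]
      rw [show -(Complex.I • p) = (-Complex.I) • p by module, TensorProduct.smul_tmul']
    rw [heq] at hb
    exact hscal _ _ (neg_ne_zero.mpr Complex.I_ne_zero) hb
  have hqx : q ⊗ₜ[ℂ] σx ∈ K :=
    hhalf q σx (by simpa using hanti 1 q σy σz σx hyz hzy hg5 hqz)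
  have hqy : q ⊗ₜ[ℂ] σy ∈ K :=
    hhalf q σy (by simpa using hanti q 1 σz σx σy hzx hxz hqz hg4)
  have hpx : p ⊗ₜ[ℂ] σx ∈ K :=
    hhalf p σx (by simpa using hanti 1 p σy σz σx hyz hzy hg5 hpz)
  have hpy : p ⊗ₜ[ℂ] σy ∈ K :=
    hhalf p σy (by simpa using hanti p 1 σz σx σy hzx hxz hpz hg4)
  have h1z : (1 : Module.End ℂ (Polynomial ℂ)) ⊗ₜ[ℂ] σz ∈ K :=
    hhalf 1 σz (by simpa using hanti 1 1 σx σy σz hxy hyx hg4 hg5)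
  -- main induction: all monomials tensored with each Pauli matrix
  have main : ∀ d r s : ℕ, r + s ≤ d →
      ((q^r*p^s) ⊗ₜ[ℂ] σx ∈ K ∧ (q^r*p^s) ⊗ₜ[ℂ] σy ∈ K ∧ (q^r*p^s) ⊗ₜ[ℂ] σz ∈ K) := by
    intro d
    induction d with
    | zero =>
      intro r s hrs
      have hr : r = 0 := by omega
      have hs : s = 0 := by omega
      subst hr; subst hs
      exact ⟨by simpa using hg4, by simpa using hg5, by simpa using h1z⟩
    | succ d ihd =>
      intro r s hrs
      by_cases hle : r + s ≤ d
      · exact ihd r s hle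
      have hd1 : r + s = d + 1 := by omega
      rcases Nat.eq_zero_or_pos r with hr0 | hrpos
      · subst hr0
        obtain ⟨t, ht⟩ : ∃ t, s = t + 1 := ⟨d, by omega⟩
        subst ht
        have hA := ihd 0 t (by omega)
        have hkey : p*(q^0*p^t) + (q^0*p^t)*p = (q^0*p^(t+1)) + (q^0*p^(t+1)) := by
          simp only [pow_zero, one_mul]
          rw [← pow_succ', ← pow_succ]
        refine ⟨hhalf _ _ ?_, hhalf _ _ ?_, hhalf _ _ ?_⟩
        · have h2 := hanti p _ σy σz σx hyz hzy hpy hA.2.2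
          rwa [hkey] at h2
        · have h2 := hanti p _ σz σx σy hzx hxz hpz hA.1
          rwa [hkey] at h2
        · have h2 := hanti p _ σx σy σz hxy hyx hpx hA.2.1
          rwa [hkey] at h2
      · obtain ⟨r', hr'⟩ : ∃ r', r = r' + 1 := ⟨r-1, by omega⟩
        subst hr'
        have hA := ihd r' s (by omega)
        have hlow := ihd r' (s-1) (by omega)
        have hkey : q*(q^r'*p^s) + (q^r'*p^s)*q
            = (q^(r'+1)*p^s + q^(r'+1)*p^s) - ((s:ℂ)*Complex.I)•(q^r'*p^(s-1)) := by
          rw [hswap r' s, ← mul_assoc, ← pow_succ']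
          abel
        have step : ∀ (A B C : Matrix (Fin 2) (Fin 2) ℂ),
            A*B = Complex.I • C → B*A = -(Complex.I • C) →
            q ⊗ₜ[ℂ] A ∈ K → (q^r'*p^s) ⊗ₜ[ℂ] B ∈ K → (q^r'*p^(s-1)) ⊗ₜ[ℂ] C ∈ K →
            (q^(r'+1)*p^s) ⊗ₜ[ℂ] C ∈ K := by
          intro A B C hAB hBA h1 h2 h3
          have h4 := hanti q _ A B C hAB hBA h1 h2
          rw [hkey] at h4
          have h5 := K.add_mem h4 (K.smul_mem ((s:ℂ)*Complex.I) h3)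
          have heq : ((q^(r'+1)*p^s + q^(r'+1)*p^s) ⊗ₜ[ℂ] C)
              = ((q^(r'+1)*p^s + q^(r'+1)*p^s) - ((s:ℂ)*Complex.I)•(q^r'*p^(s-1))) ⊗ₜ[ℂ] C
                + ((s:ℂ)*Complex.I)•((q^r'*p^(s-1)) ⊗ₜ[ℂ] C) := by
            rw [TensorProduct.sub_tmul, TensorProduct.smul_tmul']
            module
          exact hhalf _ _ (heq ▸ h5)
        exact ⟨step σy σz σx hyz hzy hqy hA.2.2 hlow.1,
               step σz σx σy hzx hxz hqz hA.1 hlow.2.1,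
               step σx σy σz hxy hyx hqx hA.2.1 hlow.2.2⟩
  -- monomials tensored with the identity matrix
  have hone : ∀ r s : ℕ, (q^r*p^s) ⊗ₜ[ℂ] (1 : Matrix (Fin 2) (Fin 2) ℂ) ∈ K := by
    intro r s
    have h1 := (main (r+s+1) r (s+1) (by omega)).1
    have hb := K.lie_mem h1 hqx
    have heq : ⁅(q^r*p^(s+1)) ⊗ₜ[ℂ] σx, q ⊗ₜ[ℂ] σx⁆
        = (-(((s:ℂ)+1)*Complex.I)) • ((q^r*p^s) ⊗ₜ[ℂ] (1 : Matrix (Fin 2) (Fin 2) ℂ)) := by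
      rw [tbrk, hxx, hswap r (s+1), ← mul_assoc, ← pow_succ']
      simp only [Nat.add_sub_cancel, Nat.cast_add, Nat.cast_one,
        TensorProduct.sub_tmul, ← TensorProduct.smul_tmul']
      module
    rw [heq] at hb
    refine hscal _ _ ?_ hb
    have hs1 : ((s:ℂ)+1) ≠ 0 := by
      have : ((s+1 : ℕ) : ℂ) ≠ 0 := Nat.cast_ne_zero.mpr (Nat.succ_ne_zero s)
      simpa using this
    exact neg_ne_zero.mpr (mul_ne_zero hs1 Complex.I_ne_zero)
  -- final assembly
  intro r s M
  have hMdec : M = ((M 0 0 + M 1 1)/2) • (1 : Matrix (Fin 2) (Fin 2) ℂ)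
      + ((M 0 1 + M 1 0)/2) • σx
      + (Complex.I*(M 0 1 - M 1 0)/2) • σy
      + ((M 0 0 - M 1 1)/2) • σz := by
    rw [hx, hy, hz]
    ext i j
    fin_cases i <;> fin_cases j <;> simp [Matrix.one_apply] <;>
      (try (ring_nf; simp [Complex.I_sq])) <;> try ring
  rw [hMdec]
  simp only [TensorProduct.tmul_add, TensorProduct.tmul_smul]
  exact K.add_mem (K.add_mem (K.add_mem
    (K.smul_mem _ (hone r s))
    (K.smul_mem _ (main (r+s) r s le_rfl).1))
    (K.smul_mem _ (main (r+s) r s le_rfl).2.1))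
    (K.smul_mem _ (main (r+s) r s le_rfl).2.2)
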